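/- For every ε > 0, the set of natural numbers n with d(n) ≤ (log n)^{1+ε} has natural density 1, where d(n) denotes the number of divisors of n. -/

import Mathlib

open scoped Classical

open Finset Filter

lemma sum_divisors_card_le (N : ℕ) :
    ∑ n ∈ Finset.Icc 1 N, (n.divisors.card : ℝ) ≤ N * (1 + Real.log N) := by
  have h1 : ∀ n ∈ Finset.Icc 1 N,
      (n.divisors.card : ℝ) ≤ (((Finset.Icc 1 N).filter (· ∣ n)).card : ℝ) := by
    intro n hn
    simp only [mem_Icc] at hn
    have : n.divisors ⊆ (Finset.Icc 1 N).filter (· ∣ n) := by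
      intro d hd
      rw [Nat.mem_divisors] at hd
      simp only [mem_filter, mem_Icc]
      exact ⟨⟨Nat.pos_of_dvd_of_pos hd.1 (by omega),
        le_trans (Nat.le_of_dvd (by omega) hd.1) hn.2⟩, hd.1⟩
    exact_mod_cast Nat.cast_le.mpr (Finset.card_le_card this)
  calc ∑ n ∈ Finset.Icc 1 N, (n.divisors.card : ℝ)
      ≤ ∑ n ∈ Finset.Icc 1 N, (((Finset.Icc 1 N).filter (· ∣ n)).card : ℝ) :=
        Finset.sum_le_sum h1
    _ = ∑ d ∈ Finset.Icc 1 N, ((N / d : ℕ) : ℝ) := by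
        simp only [Finset.card_filter]
        push_cast
        rw [Finset.sum_comm]
        refine Finset.sum_congr rfl fun d hd => ?_
        have h : Finset.Icc 1 N = Finset.Ioc 0 N := rfl
        rw [h, ← Nat.Ioc_filter_dvd_card_eq_div N d, Finset.card_filter]
        push_cast
        rfl
    _ ≤ ∑ d ∈ Finset.Icc 1 N, (N : ℝ) / d :=
        Finset.sum_le_sum fun d _ => Nat.cast_div_le
    _ = N * ∑ d ∈ Finset.Icc 1 N, (1 : ℝ) / d := by
        rw [Finset.mul_sum]; exact Finset.sum_congr rfl fun d _ => by ring
    _ ≤ N * (1 + Real.log N) := by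
        refine mul_le_mul_of_nonneg_left ?_ (Nat.cast_nonneg N)
        have := harmonic_le_one_add_log N
        rw [harmonic_eq_sum_Icc] at this
        push_cast at this
        convert this using 2
        · rfl
        · simp

lemma bad_card_le (ε : ℝ) (hε : 0 < ε) (N : ℕ) (hN : 3 ≤ N) :
    (((Finset.Icc 1 N).filter
        (fun n : ℕ => ¬ ((n.divisors.card : ℝ) ≤ Real.log n ^ (1 + ε)))).card : ℝ)
      ≤ Nat.sqrt N + N * (1 + Real.log N) / ((Real.log N / 2) ^ ((1:ℝ) + ε)) := by
  classical
  set B := (Finset.Icc 1 N).filter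
      (fun n : ℕ => ¬ ((n.divisors.card : ℝ) ≤ Real.log n ^ (1 + ε))) with hB
  have hlogN : 0 < Real.log N := by
    apply Real.log_pos
    exact_mod_cast by omega
  set T : ℝ := (Real.log N / 2) ^ ((1:ℝ) + ε) with hT
  have hTpos : 0 < T := Real.rpow_pos_of_pos (by linarith) _
  have hsplit : B.card = (B.filter (· ≤ Nat.sqrt N)).card
      + (B.filter (fun n => ¬ n ≤ Nat.sqrt N)).card :=
    (Finset.card_filter_add_card_filter_not _).symm
  have h1 : (B.filter (· ≤ Nat.sqrt N)).card ≤ Nat.sqrt N := by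
    have : B.filter (· ≤ Nat.sqrt N) ⊆ Finset.Icc 1 (Nat.sqrt N) := by
      intro n hn
      simp only [hB, mem_filter, mem_Icc] at hn ⊢
      exact ⟨hn.1.1.1, hn.2⟩
    simpa using Finset.card_le_card this
  set B2 := B.filter (fun n => ¬ n ≤ Nat.sqrt N) with hB2
  have hMark : ∀ n ∈ B2, T ≤ (n.divisors.card : ℝ) := by
    intro n hn
    simp only [hB2, hB, mem_filter, mem_Icc, not_le] at hn
    obtain ⟨⟨⟨hn1, hnN⟩, hbad⟩, hsq⟩ := hn
    have hsqn : Real.sqrt N ≤ (n : ℝ) := by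
      have h2 : (N : ℝ) < ((Nat.sqrt N + 1 : ℕ) : ℝ) ^ 2 := by
        exact_mod_cast by nlinarith [Nat.lt_succ_sqrt' N]
      have := (Real.sqrt_lt' (by positivity : (0:ℝ) < ((Nat.sqrt N + 1 : ℕ) : ℝ))).mpr h2
      have hle : ((Nat.sqrt N + 1 : ℕ) : ℝ) ≤ (n : ℝ) := by exact_mod_cast hsq
      linarith
    have hlog : Real.log N / 2 ≤ Real.log n := by
      have := Real.log_le_log (Real.sqrt_pos.mpr (by positivity)) hsqn
      rwa [Real.log_sqrt (Nat.cast_nonneg N)] at this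
    have : T ≤ Real.log n ^ ((1:ℝ) + ε) :=
      Real.rpow_le_rpow (by linarith) hlog (by linarith)
    linarith [hbad, this]
  have hsum : (B2.card : ℝ) * T ≤ N * (1 + Real.log N) := by
    have := Finset.card_nsmul_le_sum B2 (fun n => (n.divisors.card : ℝ)) T hMark
    rw [nsmul_eq_mul] at this
    refine le_trans this (le_trans ?_ (sum_divisors_card_le N))
    apply Finset.sum_le_sum_of_subset_of_nonneg
    · exact (Finset.filter_subset _ _).trans (Finset.filter_subset _ _)
    · intro i _ _; positivity
  have h2 : (B2.card : ℝ) ≤ N * (1 + Real.log N) / T := by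
    rw [le_div_iff₀ hTpos]; exact hsum
  calc (B.card : ℝ) = (B.filter (· ≤ Nat.sqrt N)).card + (B2.card : ℝ) := by
        rw [hsplit]; push_cast; ring
    _ ≤ Nat.sqrt N + N * (1 + Real.log N) / T := by
        gcongr

lemma aux_sqrt_tendsto : Tendsto (fun N : ℕ => (Nat.sqrt N : ℝ) / N) atTop (nhds 0) := by
  have h0 : Tendsto (fun N : ℕ => (Real.sqrt N)⁻¹) atTop (nhds 0) := by
    have := (tendsto_rpow_neg_atTop (by norm_num : (0:ℝ) < 1/2)).comp
      (tendsto_natCast_atTop_atTop (R := ℝ))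
    refine this.congr fun N => ?_
    simp only [Function.comp_apply, Real.sqrt_eq_rpow,
      ← Real.rpow_neg (Nat.cast_nonneg N)]
  have hub : ∀ᶠ N : ℕ in atTop, (Nat.sqrt N : ℝ) / N ≤ (Real.sqrt N)⁻¹ := by
    filter_upwards [eventually_ge_atTop 1] with N hN
    have hNpos : (0:ℝ) < N := by exact_mod_cast hN
    have h1 : (Nat.sqrt N : ℝ) ≤ Real.sqrt N := by
      have h2' : Nat.sqrt N ^ 2 ≤ N := Nat.sqrt_le' N
      have h2 : ((Nat.sqrt N : ℝ)) ^ 2 ≤ (N : ℝ) := by exact_mod_cast h2'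
      have h3 := Real.sqrt_le_sqrt h2
      rwa [Real.sqrt_sq (by positivity)] at h3
    have hsq : Real.sqrt N * Real.sqrt N = N := Real.mul_self_sqrt hNpos.le
    rw [div_le_iff₀ hNpos, inv_mul_eq_div, le_div_iff₀ (Real.sqrt_pos.mpr hNpos)]
    nlinarith [Real.sqrt_pos.mpr hNpos]
  have hlb : ∀ᶠ N : ℕ in atTop, (0:ℝ) ≤ (Nat.sqrt N : ℝ) / N := by
    filter_upwards with N; positivity
  exact tendsto_of_tendsto_of_tendsto_of_le_of_le' tendsto_const_nhds h0 hlb hub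

lemma aux_ratio_tendsto (ε : ℝ) (hε : 0 < ε) :
    Tendsto (fun L : ℝ => (1 + L) / ((L / 2) ^ ((1:ℝ) + ε))) atTop (nhds 0) := by
  have h0 : Tendsto (fun L : ℝ => 4 * (L / 2) ^ (-ε)) atTop (nhds 0) := by
    have := (tendsto_rpow_neg_atTop hε).comp (tendsto_id.atTop_div_const two_pos)
    simpa using this.const_mul 4
  have hub : ∀ᶠ L : ℝ in atTop, (1 + L) / ((L / 2) ^ ((1:ℝ) + ε)) ≤ 4 * (L / 2) ^ (-ε) := by
    filter_upwards [eventually_ge_atTop (2:ℝ)] with L hL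
    have hL2 : (0:ℝ) < L / 2 := by linarith
    have hX : (0:ℝ) < (L / 2) ^ (ε:ℝ) := Real.rpow_pos_of_pos hL2 _
    rw [Real.rpow_add hL2, Real.rpow_one, Real.rpow_neg hL2.le, div_le_iff₀ (by positivity)]
    calc (1 + L) ≤ 4 * (L/2) := by linarith
      _ = 4 * ((L / 2) ^ (ε:ℝ))⁻¹ * (L / 2 * (L / 2) ^ (ε:ℝ)) := by field_simp
      _ = _ := by ring
  have hlb : ∀ᶠ L : ℝ in atTop, (0:ℝ) ≤ (1 + L) / ((L / 2) ^ ((1:ℝ) + ε)) := by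
    filter_upwards [eventually_ge_atTop (2:ℝ)] with L hL
    have hL2 : (0:ℝ) < L / 2 := by linarith
    positivity
  exact tendsto_of_tendsto_of_tendsto_of_le_of_le' tendsto_const_nhds h0 hlb hub

/-- for every ε > 0, almost all n satisfy d(n) ≤ (log n)^{1+ε}. -/
theorem stmt_5 (ε : ℝ) (hε : 0 < ε) :
    Filter.Tendsto
      (fun N : ℕ =>
        (((Finset.Icc 1 N).filter
            (fun n : ℕ => (n.divisors.card : ℝ) ≤ Real.log n ^ (1 + ε))).card : ℝ) / (N : ℝ))
      Filter.atTop (nhds 1) := by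
  classical
  set P : ℕ → Prop := fun n : ℕ => (n.divisors.card : ℝ) ≤ Real.log n ^ (1 + ε) with hP
  have hbad : Tendsto
      (fun N : ℕ => (((Finset.Icc 1 N).filter (fun n => ¬ P n)).card : ℝ) / N)
      atTop (nhds 0) := by
    have h0 : Tendsto (fun N : ℕ =>
        (Nat.sqrt N : ℝ) / N + (1 + Real.log N) / ((Real.log N / 2) ^ ((1:ℝ) + ε)))
        atTop (nhds 0) := by
      have h2 := (aux_ratio_tendsto ε hε).comp
        (Real.tendsto_log_atTop.comp (tendsto_natCast_atTop_atTop (R := ℝ)))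
      simpa using aux_sqrt_tendsto.add h2
    have hub : ∀ᶠ N : ℕ in atTop,
        (((Finset.Icc 1 N).filter (fun n => ¬ P n)).card : ℝ) / N
          ≤ (Nat.sqrt N : ℝ) / N + (1 + Real.log N) / ((Real.log N / 2) ^ ((1:ℝ) + ε)) := by
      filter_upwards [eventually_ge_atTop 3] with N hN
      have hNpos : (0:ℝ) < N := by exact_mod_cast by omega
      have hlogN : 0 < Real.log N := Real.log_pos (by exact_mod_cast by omega)
      have hT : 0 < (Real.log N / 2) ^ ((1:ℝ) + ε) := Real.rpow_pos_of_pos (by linarith) _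
      have h := bad_card_le ε hε N hN
      rw [div_le_iff₀ hNpos]
      calc (((Finset.Icc 1 N).filter (fun n => ¬ P n)).card : ℝ)
          ≤ Nat.sqrt N + N * (1 + Real.log N) / ((Real.log N / 2) ^ ((1:ℝ) + ε)) := h
        _ = ((Nat.sqrt N : ℝ) / N
            + (1 + Real.log N) / ((Real.log N / 2) ^ ((1:ℝ) + ε))) * N := by
            field_simp
    have hlb : ∀ᶠ N : ℕ in atTop,
        (0:ℝ) ≤ (((Finset.Icc 1 N).filter (fun n => ¬ P n)).card : ℝ) / N := by
      filter_upwards with N; positivity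
    exact tendsto_of_tendsto_of_tendsto_of_le_of_le' tendsto_const_nhds h0 hlb hub
  have key : ∀ᶠ N : ℕ in atTop,
      1 - (((Finset.Icc 1 N).filter (fun n => ¬ P n)).card : ℝ) / N
        = (((Finset.Icc 1 N).filter P).card : ℝ) / N := by
    filter_upwards [eventually_ge_atTop 1] with N hN
    have hNpos : (0:ℝ) < N := by exact_mod_cast hN
    have hcard : ((Finset.Icc 1 N).filter P).card
        + ((Finset.Icc 1 N).filter (fun n => ¬ P n)).card = N := by
      rw [Finset.card_filter_add_card_filter_not]
      simp
    have hcard' : (((Finset.Icc 1 N).filter P).card : ℝ)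
        + (((Finset.Icc 1 N).filter (fun n => ¬ P n)).card : ℝ) = N := by
      exact_mod_cast hcard
    field_simp
    linarith
  have := (tendsto_const_nhds (x := (1:ℝ)) (f := atTop)).sub hbad
  rw [sub_zero] at this
  exact Tendsto.congr' key this
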